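/- Let n ≥ 3 and (n−2)/2 < β < n(n−2)/4, and set c_β = n(n−2) − 4β. Then the set of functions w ∈ C²(ℝ) with w(t) > 0 for all t ∈ ℝ satisfying w''(t) − ((n−2)/2)² w(t) + w(t)^{(n+2)/(n−2)} + c_β (e^{−2t}/(1+e^{−2t})²) w(t) = 0 for all t ∈ ℝ is infinite. -/

import Mathlib

open Set Real

noncomputable section Stmt15Aux

/-- clamp to `[0, R]` -/
def clP (R u : ℝ) : ℝ := min (max u 0) R

/-- clamp to `[-V, V]` -/
def clS (V v : ℝ) : ℝ := min (max v (-V)) V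

/-- clamped nonlinearity -/
def gg (p R u : ℝ) : ℝ := clP R u ^ p

def Phi (R u : ℝ) : ℝ := if u ≤ 0 then 0 else if u ≤ R then u ^ 2 / 2 else R * u - R ^ 2 / 2

def Psi (p R u : ℝ) : ℝ :=
  if u ≤ 0 then 0 else if u ≤ R then u ^ (p + 1) / (p + 1)
  else R ^ (p + 1) / (p + 1) + R ^ p * (u - R)

def Kin (V v : ℝ) : ℝ :=
  if v ≤ -V then -V * v - V ^ 2 / 2 else if v ≤ V then v ^ 2 / 2 else V * v - V ^ 2 / 2

def qf (t : ℝ) : ℝ := Real.exp (-2 * t) / (1 + Real.exp (-2 * t)) ^ 2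

def qd (t : ℝ) : ℝ :=
  2 * Real.exp (-2 * t) * (Real.exp (-2 * t) - 1) / (1 + Real.exp (-2 * t)) ^ 3

def Fv (m c p R V : ℝ) (t : ℝ) (x : ℝ × ℝ) : ℝ × ℝ :=
  (clS V x.2, (m ^ 2 - c * qf t) * clP R x.1 - gg p R x.1)

lemma one_add_exp_pos (t : ℝ) : 0 < 1 + Real.exp (-2 * t) := by positivity

lemma qf_pos (t : ℝ) : 0 < qf t := by
  unfold qf; positivity

lemma qf_le_quarter (t : ℝ) : qf t ≤ 1 / 4 := by
  unfold qf
  rw [div_le_div_iff₀ (by positivity) (by norm_num)]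
  nlinarith [sq_nonneg (1 - Real.exp (-2 * t))]

lemma qf_zero : qf 0 = 1 / 4 := by
  unfold qf; norm_num

lemma continuous_qf : Continuous qf := by
  unfold qf
  exact (Real.continuous_exp.comp (continuous_const.mul continuous_id)).div
    (((continuous_const.add (Real.continuous_exp.comp
      (continuous_const.mul continuous_id))).pow 2)) (fun t => by positivity)

lemma hasDerivAt_exp_neg2 (t : ℝ) :
    HasDerivAt (fun t : ℝ => Real.exp (-2 * t)) (-2 * Real.exp (-2 * t)) t := by
  have h1 : HasDerivAt (fun t : ℝ => -2 * t) (-2) t := by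
    simpa using (hasDerivAt_id t).const_mul (-2 : ℝ)
  have := (Real.hasDerivAt_exp (-2 * t)).comp t h1
  simpa [Function.comp_def, mul_comm] using this

lemma hasDerivAt_qf (t : ℝ) : HasDerivAt qf (qd t) t := by
  set E := Real.exp (-2 * t) with hE
  have hEpos : 0 < E := Real.exp_pos _
  have h1 := hasDerivAt_exp_neg2 t
  have hbase : HasDerivAt (fun t : ℝ => 1 + Real.exp (-2 * t)) (-2 * E) t := h1.const_add 1
  have h2 : HasDerivAt (fun t : ℝ => (1 + Real.exp (-2 * t)) ^ 2)
      (2 * (1 + E) * (-2 * E)) t := by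
    have := hbase.fun_pow 2
    refine this.congr_deriv ?_
    push_cast
    ring
  have hne : (1 + E) ^ 2 ≠ 0 := by positivity
  have h3 := h1.div h2 hne
  refine h3.congr_deriv ?_
  rw [qd, div_eq_div_iff (by positivity) (by positivity)]
  ring

lemma qd_nonpos {t : ℝ} (ht : 0 ≤ t) : qd t ≤ 0 := by
  have hE1 : Real.exp (-2 * t) ≤ 1 := Real.exp_le_one_iff.mpr (by linarith)
  have hEpos : 0 < Real.exp (-2 * t) := Real.exp_pos _
  unfold qd
  apply div_nonpos_of_nonpos_of_nonneg
  · nlinarith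
  · positivity

lemma qd_nonneg {t : ℝ} (ht : t ≤ 0) : 0 ≤ qd t := by
  have hE1 : 1 ≤ Real.exp (-2 * t) := Real.one_le_exp_iff.mpr (by linarith)
  have hEpos : 0 < Real.exp (-2 * t) := Real.exp_pos _
  unfold qd
  apply div_nonneg
  · nlinarith
  · positivity


/-- gluing lemma for piecewise-defined functions -/
lemma hasDerivAt_ite {f g : ℝ → ℝ} {a d : ℝ} (hval : f a = g a)
    (hf : HasDerivAt f d a) (hg : HasDerivAt g d a) :
    HasDerivAt (fun x => if x ≤ a then f x else g x) d a := by
  have h1 : HasDerivWithinAt (fun x => if x ≤ a then f x else g x) d (Iic a) a := by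
    apply hf.hasDerivWithinAt.congr
    · intro x hx
      simp [mem_Iic.mp hx]
    · simp
  have h2 : HasDerivWithinAt (fun x => if x ≤ a then f x else g x) d (Ici a) a := by
    apply hg.hasDerivWithinAt.congr
    · intro x hx
      rcases eq_or_lt_of_le (mem_Ici.mp hx) with h | h
      · simp [← h, hval]
      · simp [not_le.mpr h]
    · simp [hval]
  have h3 := h1.union h2
  rwa [Iic_union_Ici, hasDerivWithinAt_univ] at h3

lemma hasDerivAt_ite_left {f g : ℝ → ℝ} {a x : ℝ} {d : ℝ} (hx : x < a)
    (hf : HasDerivAt f d x) :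
    HasDerivAt (fun x => if x ≤ a then f x else g x) d x := by
  rw [Filter.EventuallyEq.hasDerivAt_iff (f₁ := f)]
  · exact hf
  · filter_upwards [Iio_mem_nhds hx] with y hy
    simp [le_of_lt (mem_Iio.mp hy)]

lemma hasDerivAt_ite_right {f g : ℝ → ℝ} {a x : ℝ} {d : ℝ} (hx : a < x)
    (hg : HasDerivAt g d x) :
    HasDerivAt (fun x => if x ≤ a then f x else g x) d x := by
  rw [Filter.EventuallyEq.hasDerivAt_iff (f₁ := g)]
  · exact hg
  · filter_upwards [Ioi_mem_nhds hx] with y hy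
    simp [not_le.mpr (mem_Ioi.mp hy)]

/-- derivative of the inner piece of `Phi` (and `Kin`) -/
lemma hasDerivAt_qinner (R : ℝ) (u : ℝ) :
    HasDerivAt (fun u : ℝ => if u ≤ R then u ^ 2 / 2 else R * u - R ^ 2 / 2) (min u R) u := by
  have hf : ∀ x : ℝ, HasDerivAt (fun u : ℝ => u ^ 2 / 2) x x := by
    intro x
    have := (hasDerivAt_pow 2 x).div_const 2
    simpa using this
  have hg : ∀ x : ℝ, HasDerivAt (fun u : ℝ => R * u - R ^ 2 / 2) R x := by
    intro x
    simpa using ((hasDerivAt_id x).const_mul R).sub_const (R ^ 2 / 2)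
  rcases lt_trichotomy u R with h | h | h
  · rw [min_eq_left h.le]
    exact hasDerivAt_ite_left h (hf u)
  · subst h
    rw [min_self]
    exact hasDerivAt_ite (by ring) (hf u) (hg u)
  · rw [min_eq_right h.le]
    exact hasDerivAt_ite_right h (hg u)

lemma hasDerivAt_Phi {R : ℝ} (hR : 0 < R) (u : ℝ) :
    HasDerivAt (Phi R) (clP R u) u := by
  have hinner := hasDerivAt_qinner R
  have h0 : ∀ x : ℝ, HasDerivAt (fun _ : ℝ => (0 : ℝ)) 0 x := fun x => hasDerivAt_const x 0
  unfold Phi clP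
  rcases lt_trichotomy u 0 with h | h | h
  · rw [max_eq_right h.le, min_eq_left hR.le]
    exact hasDerivAt_ite_left h (h0 u)
  · subst h
    rw [max_self, min_eq_left hR.le]
    have := hasDerivAt_ite (f := fun _ : ℝ => (0 : ℝ))
      (g := fun u : ℝ => if u ≤ R then u ^ 2 / 2 else R * u - R ^ 2 / 2)
      (a := 0) (d := 0) (by simp [hR.le]) (h0 0) (by simpa [min_eq_left hR.le] using hinner 0)
    exact this
  · rw [max_eq_left h.le]
    exact hasDerivAt_ite_right h (hinner u)

lemma hasDerivAt_Kin {V : ℝ} (hV : 0 < V) (v : ℝ) :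
    HasDerivAt (Kin V) (clS V v) v := by
  have hinner := hasDerivAt_qinner V
  have hlin : ∀ x : ℝ, HasDerivAt (fun v : ℝ => -V * v - V ^ 2 / 2) (-V) x := by
    intro x
    simpa using ((hasDerivAt_id x).const_mul (-V)).sub_const (V ^ 2 / 2)
  unfold Kin clS
  rcases lt_trichotomy v (-V) with h | h | h
  · rw [max_eq_right h.le, min_eq_left (by linarith)]
    exact hasDerivAt_ite_left h (hlin v)
  · subst h
    rw [max_self, min_eq_left (by linarith)]
    exact hasDerivAt_ite (by rw [if_pos (show -V ≤ V by linarith)]; ring) (hlin (-V))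
      (by simpa [min_eq_left (show -V ≤ V by linarith)] using hinner (-V))
  · rw [max_eq_left h.le]
    exact hasDerivAt_ite_right h (hinner v)

lemma hasDerivAt_rpow_aux {p : ℝ} (hp : 1 < p) (x : ℝ) (hx : 0 ≤ x) :
    HasDerivAt (fun u : ℝ => u ^ (p + 1) / (p + 1)) (x ^ p) x := by
  have hp1 : (1 : ℝ) ≤ p + 1 := by linarith
  have h := (Real.hasDerivAt_rpow_const (x := x) (p := p + 1) (Or.inr hp1)).div_const (p + 1)
  have hne : p + 1 ≠ 0 := by linarith
  have : (p + 1) * x ^ (p + 1 - 1) / (p + 1) = x ^ p := by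
    rw [add_sub_cancel_right]
    field_simp
  rwa [this] at h

lemma hasDerivAt_Psi {p R : ℝ} (hp : 1 < p) (hR : 0 < R) (u : ℝ) :
    HasDerivAt (Psi p R) (gg p R u) u := by
  have hp0 : p ≠ 0 := by linarith
  have hinner : ∀ x : ℝ, 0 ≤ x → HasDerivAt
      (fun u : ℝ => if u ≤ R then u ^ (p + 1) / (p + 1)
        else R ^ (p + 1) / (p + 1) + R ^ p * (u - R)) ((min x R) ^ p) x := by
    intro x hx
    have hlin : ∀ y : ℝ, HasDerivAt
        (fun u : ℝ => R ^ (p + 1) / (p + 1) + R ^ p * (u - R)) (R ^ p) y := by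
      intro y
      simpa using (((hasDerivAt_id y).sub_const R).const_mul (R ^ p)).const_add
        (R ^ (p + 1) / (p + 1))
    rcases lt_trichotomy x R with h | h | h
    · rw [min_eq_left h.le]
      exact hasDerivAt_ite_left h (hasDerivAt_rpow_aux hp x hx)
    · subst h
      rw [min_self]
      exact hasDerivAt_ite (by ring) (hasDerivAt_rpow_aux hp x hx) (hlin x)
    · rw [min_eq_right h.le]
      exact hasDerivAt_ite_right h (hlin x)
  have h0 : ∀ x : ℝ, HasDerivAt (fun _ : ℝ => (0 : ℝ)) 0 x := fun x => hasDerivAt_const x 0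
  unfold Psi gg clP
  rcases lt_trichotomy u 0 with h | h | h
  · rw [max_eq_right h.le, min_eq_left hR.le, Real.zero_rpow hp0]
    exact hasDerivAt_ite_left h (h0 u)
  · subst h
    rw [max_self, min_eq_left hR.le, Real.zero_rpow hp0]
    refine hasDerivAt_ite ?_ (h0 0) ?_
    · simp [hR.le, Real.zero_rpow (show p + 1 ≠ 0 by linarith)]
    · have := hinner 0 le_rfl
      rwa [min_eq_left hR.le, Real.zero_rpow hp0] at this
  · rw [max_eq_left h.le]
    exact hasDerivAt_ite_right h (hinner u h.le)

lemma Phi_nonneg {R : ℝ} (hR : 0 < R) (u : ℝ) : 0 ≤ Phi R u := by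
  unfold Phi
  split_ifs with h1 h2
  · exact le_refl 0
  · positivity
  · push_neg at h1 h2
    nlinarith

lemma Phi_of_nonpos {R u : ℝ} (hu : u ≤ 0) : Phi R u = 0 := if_pos hu

lemma Phi_of_mem {R u : ℝ} (hu0 : 0 < u) (huR : u ≤ R) : Phi R u = u ^ 2 / 2 := by
  unfold Phi
  rw [if_neg (not_le.mpr hu0), if_pos huR]

lemma Phi_le {R u : ℝ} (hR : 0 < R) (huR : u ≤ R) : Phi R u ≤ R ^ 2 / 2 := by
  unfold Phi
  split_ifs with h1
  · positivity
  · nlinarith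

lemma Psi_nonneg {p R : ℝ} (hp : 1 < p) (hR : 0 < R) (u : ℝ) : 0 ≤ Psi p R u := by
  unfold Psi
  split_ifs with h1 h2
  · exact le_refl 0
  · push_neg at h1
    have := Real.rpow_nonneg h1.le (p + 1)
    positivity
  · push_neg at h1 h2
    have h3 := Real.rpow_nonneg hR.le (p + 1)
    have h4 := Real.rpow_nonneg hR.le p
    have : 0 ≤ u - R := by linarith
    positivity

lemma Psi_of_nonpos {p R u : ℝ} (hu : u ≤ 0) : Psi p R u = 0 := if_pos hu

lemma Psi_of_mem {p R u : ℝ} (hu0 : 0 < u) (huR : u ≤ R) :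
    Psi p R u = u ^ (p + 1) / (p + 1) := by
  unfold Psi
  rw [if_neg (not_le.mpr hu0), if_pos huR]

lemma Kin_nonneg {V : ℝ} (hV : 0 < V) (v : ℝ) : 0 ≤ Kin V v := by
  unfold Kin
  split_ifs with h1 h2
  · nlinarith
  · positivity
  · push_neg at h1 h2
    nlinarith

lemma Kin_zero {V : ℝ} (hV : 0 < V) : Kin V 0 = 0 := by
  unfold Kin
  rw [if_neg (by simp; linarith), if_pos hV.le]
  norm_num

lemma clP_eq {R u : ℝ} (hu0 : 0 ≤ u) (huR : u ≤ R) : clP R u = u := by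
  unfold clP
  rw [max_eq_left hu0, min_eq_left huR]

lemma clS_eq {V v : ℝ} (h1 : -V ≤ v) (h2 : v ≤ V) : clS V v = v := by
  unfold clS
  rw [max_eq_left h1, min_eq_left h2]

lemma clP_mem {R : ℝ} (hR : 0 ≤ R) (u : ℝ) : 0 ≤ clP R u ∧ clP R u ≤ R := by
  constructor
  · exact le_min (le_max_right u 0) hR
  · exact min_le_right _ _

lemma clS_abs_le {V : ℝ} (hV : 0 ≤ V) (v : ℝ) : |clS V v| ≤ V := by
  rw [abs_le]
  constructor
  · exact le_min (le_max_right v (-V)) (by linarith)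
  · exact min_le_right _ _

lemma clP_lipschitz (R : ℝ) : LipschitzWith 1 (clP R) := by
  unfold clP
  exact (LipschitzWith.id.max_const 0).min_const R

lemma clS_lipschitz (V : ℝ) : LipschitzWith 1 (clS V) := by
  unfold clS
  exact (LipschitzWith.id.max_const (-V)).min_const V

lemma clP_dist_le (R : ℝ) (x y : ℝ) : |clP R x - clP R y| ≤ |x - y| := by
  have := (clP_lipschitz R).dist_le_mul x y
  simpa [Real.dist_eq] using this

lemma clS_dist_le (V : ℝ) (x y : ℝ) : |clS V x - clS V y| ≤ |x - y| := by
  have := (clS_lipschitz V).dist_le_mul x y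
  simpa [Real.dist_eq] using this

lemma abs_rpow_sub_le {p R : ℝ} (hp : 1 < p) (hR : 0 < R) {x y : ℝ}
    (hx : x ∈ Icc (0 : ℝ) R) (hy : y ∈ Icc (0 : ℝ) R) :
    |x ^ p - y ^ p| ≤ p * R ^ (p - 1) * |x - y| := by
  have hderiv : ∀ z ∈ Icc (0 : ℝ) R, HasDerivWithinAt (fun u : ℝ => u ^ p)
      (p * z ^ (p - 1)) (Icc (0 : ℝ) R) z := fun z _ =>
    (Real.hasDerivAt_rpow_const (Or.inr hp.le)).hasDerivWithinAt
  have hbound : ∀ z ∈ Icc (0 : ℝ) R, ‖p * z ^ (p - 1)‖ ≤ p * R ^ (p - 1) := by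
    intro z hz
    rw [Real.norm_eq_abs, abs_mul, abs_of_pos (by linarith : (0 : ℝ) < p),
      abs_of_nonneg (Real.rpow_nonneg hz.1 _)]
    have h1 : z ^ (p - 1) ≤ R ^ (p - 1) := Real.rpow_le_rpow hz.1 hz.2 (by linarith)
    nlinarith
  have := Convex.norm_image_sub_le_of_norm_hasDerivWithin_le hderiv hbound
    (convex_Icc (0 : ℝ) R) hy hx
  simpa [Real.norm_eq_abs] using this

lemma gg_dist_le {p R : ℝ} (hp : 1 < p) (hR : 0 < R) (x y : ℝ) :
    |gg p R x - gg p R y| ≤ p * R ^ (p - 1) * |x - y| := by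
  unfold gg
  have hx := clP_mem hR.le x
  have hy := clP_mem hR.le y
  calc |clP R x ^ p - clP R y ^ p| ≤ p * R ^ (p - 1) * |clP R x - clP R y| :=
        abs_rpow_sub_le hp hR ⟨hx.1, hx.2⟩ ⟨hy.1, hy.2⟩
    _ ≤ p * R ^ (p - 1) * |x - y| := by
        have h1 : 0 ≤ p * R ^ (p - 1) := by
          have := Real.rpow_nonneg hR.le (p - 1)
          nlinarith
        exact mul_le_mul_of_nonneg_left (clP_dist_le R x y) h1

lemma A_bound {m c : ℝ} (hm : 0 < m) (hc : 0 < c) (hcm : c < 4 * m ^ 2) (t : ℝ) :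
    0 < m ^ 2 - c * qf t ∧ m ^ 2 - c * qf t ≤ m ^ 2 := by
  have h1 := qf_pos t
  have h2 := qf_le_quarter t
  constructor
  · nlinarith
  · nlinarith

lemma Fv_lipschitz {m c p R V : ℝ} (hm : 0 < m) (hc : 0 < c) (hcm : c < 4 * m ^ 2)
    (hp : 1 < p) (hR : 0 < R) (t : ℝ) :
    LipschitzWith (Real.toNNReal (max 1 (m ^ 2 + p * R ^ (p - 1)))) (Fv m c p R V t) := by
  have hKnn : (0 : ℝ) ≤ max 1 (m ^ 2 + p * R ^ (p - 1)) := le_trans zero_le_one (le_max_left _ _)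
  apply LipschitzWith.of_dist_le_mul
  intro x y
  rw [Real.coe_toNNReal _ hKnn, Prod.dist_eq]
  have hd1 : dist x.1 y.1 ≤ dist x y := by rw [Prod.dist_eq]; exact le_max_left _ _
  have hd2 : dist x.2 y.2 ≤ dist x y := by rw [Prod.dist_eq]; exact le_max_right _ _
  have hdist0 : 0 ≤ dist x y := dist_nonneg
  apply max_le
  · calc dist (Fv m c p R V t x).1 (Fv m c p R V t y).1 = |clS V x.2 - clS V y.2| := by
          rw [Fv, Fv, Real.dist_eq]
      _ ≤ |x.2 - y.2| := clS_dist_le V _ _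
      _ = dist x.2 y.2 := (Real.dist_eq _ _).symm
      _ ≤ dist x y := hd2
      _ ≤ max 1 (m ^ 2 + p * R ^ (p - 1)) * dist x y := by
          nlinarith [le_max_left (1 : ℝ) (m ^ 2 + p * R ^ (p - 1))]
  · have hA := A_bound hm hc hcm t
    set A := m ^ 2 - c * qf t with hAdef
    calc dist (Fv m c p R V t x).2 (Fv m c p R V t y).2
        = |(A * clP R x.1 - gg p R x.1) - (A * clP R y.1 - gg p R y.1)| := by
          rw [Fv, Fv, Real.dist_eq]
      _ ≤ |A * (clP R x.1 - clP R y.1)| + |gg p R x.1 - gg p R y.1| := by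
          rw [show (A * clP R x.1 - gg p R x.1) - (A * clP R y.1 - gg p R y.1)
            = A * (clP R x.1 - clP R y.1) - (gg p R x.1 - gg p R y.1) by ring]
          exact abs_sub _ _
      _ ≤ m ^ 2 * |x.1 - y.1| + p * R ^ (p - 1) * |x.1 - y.1| := by
          have h1 : |A * (clP R x.1 - clP R y.1)| ≤ m ^ 2 * |x.1 - y.1| := by
            rw [abs_mul]
            have := clP_dist_le R x.1 y.1
            have hAa : |A| ≤ m ^ 2 := by rw [abs_of_pos hA.1]; exact hA.2
            have h0 : (0:ℝ) ≤ |A| := abs_nonneg _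
            nlinarith [abs_nonneg (x.1 - y.1), abs_nonneg (clP R x.1 - clP R y.1)]
          have h2 := gg_dist_le hp hR x.1 y.1
          linarith
      _ = (m ^ 2 + p * R ^ (p - 1)) * |x.1 - y.1| := by ring
      _ ≤ max 1 (m ^ 2 + p * R ^ (p - 1)) * dist x y := by
          have h3 : (m ^ 2 + p * R ^ (p - 1)) ≤ max 1 (m ^ 2 + p * R ^ (p - 1)) :=
            le_max_right _ _
          have h4 : |x.1 - y.1| ≤ dist x y := by rw [← Real.dist_eq]; exact hd1
          have h5 : (0:ℝ) ≤ m ^ 2 + p * R ^ (p - 1) := by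
            have := Real.rpow_nonneg hR.le (p - 1)
            nlinarith
          nlinarith [abs_nonneg (x.1 - y.1)]

lemma Fv_norm_le {m c p R V : ℝ} (hm : 0 < m) (hc : 0 < c) (hcm : c < 4 * m ^ 2)
    (hp : 1 < p) (hR : 0 < R) (hV : 0 < V) (t : ℝ) (x : ℝ × ℝ) :
    ‖Fv m c p R V t x‖ ≤ max V (m ^ 2 * R + R ^ p) := by
  have hA := A_bound hm hc hcm t
  have hclP := clP_mem hR.le x.1
  have hgg1 : 0 ≤ gg p R x.1 := Real.rpow_nonneg (hclP.1) p
  have hgg2 : gg p R x.1 ≤ R ^ p := Real.rpow_le_rpow hclP.1 hclP.2 (by linarith)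
  have hRp : (0:ℝ) ≤ R ^ p := Real.rpow_nonneg hR.le p
  rw [Fv, Prod.norm_def]
  apply max_le
  · exact le_trans (by simpa [Real.norm_eq_abs] using clS_abs_le hV.le x.2) (le_max_left _ _)
  · refine le_trans ?_ (le_max_right V (m ^ 2 * R + R ^ p))
    rw [Real.norm_eq_abs, abs_le]
    dsimp only
    have hx1 : 0 ≤ (m ^ 2 - c * qf t) * clP R x.1 := mul_nonneg hA.1.le hclP.1
    have hx2 : (m ^ 2 - c * qf t) * clP R x.1 ≤ m ^ 2 * R := by nlinarith
    constructor
    · nlinarith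
    · nlinarith

lemma Fv_cont {m c p R V : ℝ} (x : ℝ × ℝ) : Continuous fun t => Fv m c p R V t x := by
  unfold Fv
  exact continuous_const.prodMk
    (((continuous_const.sub (continuous_const.mul continuous_qf)).mul continuous_const).sub
      continuous_const)

/-- Global existence for a bounded, uniformly Lipschitz time-dependent ODE on `ℝ × ℝ`. -/
lemma exists_global_solution {F : ℝ → ℝ × ℝ → ℝ × ℝ} {L : NNReal} {C : ℝ}
    (hC : 0 ≤ C) (hL : ∀ t, LipschitzWith L (F t)) (hb : ∀ t x, ‖F t x‖ ≤ C)
    (hct : ∀ x, Continuous fun t => F t x) (x₀ : ℝ × ℝ) :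
    ∃ x : ℝ → ℝ × ℝ, x 0 = x₀ ∧ ∀ t, HasDerivAt x (F t (x t)) t := by
  have key : ∀ k : ℕ, ∃ f : ℝ → ℝ × ℝ, f 0 = x₀ ∧ ∀ t ∈ Icc (-(k + 1 : ℝ)) (k + 1),
      HasDerivWithinAt f (F t (f t)) (Icc (-(k + 1 : ℝ)) (k + 1)) t := by
    intro k
    have hk1 : (0 : ℝ) ≤ (k : ℝ) + 1 := by positivity
    have hpl : IsPicardLindelof F (tmin := -(k + 1 : ℝ)) (tmax := k + 1)
        ⟨0, by constructor <;> linarith⟩ x₀ (C.toNNReal * ((k : ℝ) + 1).toNNReal) 0 C.toNNReal L :=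
      { lipschitzOnWith := fun t _ => (hL t).lipschitzOnWith
        continuousOn := fun x _ => (hct x).continuousOn
        norm_le := fun t _ x _ => by rw [Real.coe_toNNReal _ hC]; exact hb t x
        mul_max_le := by
          simp [Real.coe_toNNReal _ hC, Real.coe_toNNReal _ hk1] }
    exact hpl.exists_eq_forall_mem_Icc_hasDerivWithinAt₀
  choose f hf0 hfd using key
  have hmem : ∀ (k : ℕ) (t : ℝ), |t| ≤ (k : ℝ) + 1 → t ∈ Icc (-(k + 1 : ℝ)) (k + 1) := by
    intro k t ht
    have := abs_le.mp ht
    exact ⟨by linarith [this.1], this.2⟩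
  have hfD : ∀ (k : ℕ) (t : ℝ), |t| < (k : ℝ) + 1 → HasDerivAt (f k) (F t (f k t)) t := by
    intro k t ht
    have h2 := abs_lt.mp ht
    exact (hfd k t (hmem k t ht.le)).hasDerivAt
      (Icc_mem_nhds (by linarith [h2.1]) h2.2)
  have hcont : ∀ k : ℕ, ContinuousOn (f k) (Icc (-(k + 1 : ℝ)) (k + 1)) :=
    fun k t ht => ((hfd k t ht).continuousWithinAt)
  have huniq : ∀ j k : ℕ, j ≤ k → EqOn (f j) (f k) (Icc (-(j + 1 : ℝ)) (j + 1)) := by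
    intro j k hjk
    have hjk' : (j : ℝ) + 1 ≤ (k : ℝ) + 1 := by
      have : (j : ℝ) ≤ (k : ℝ) := Nat.cast_le.mpr hjk
      linarith
    have hsub : Icc (-(j + 1 : ℝ)) (j + 1) ⊆ Icc (-(k + 1 : ℝ)) (k + 1) :=
      Icc_subset_Icc (by linarith) hjk'
    have hj0 : (0 : ℝ) ≤ (j : ℝ) := Nat.cast_nonneg j
    apply ODE_solution_unique_of_mem_Icc (v := F) (s := fun _ => univ) (K := L)
      (fun t _ => (hL t).lipschitzOnWith) (t₀ := 0)
      (⟨by linarith, by linarith⟩ : (0:ℝ) ∈ Ioo (-(j + 1 : ℝ)) (j + 1))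
    · exact hcont j
    · intro t ht
      exact hfD j t (abs_lt.mpr ⟨by linarith [ht.1], ht.2⟩)
    · exact fun t _ => mem_univ _
    · exact (hcont k).mono hsub
    · intro t ht
      exact hfD k t (lt_of_lt_of_le (abs_lt.mpr ⟨by linarith [ht.1], ht.2⟩) hjk')
    · exact fun t _ => mem_univ _
    · rw [hf0 j, hf0 k]
  refine ⟨fun t => f ⌈|t|⌉₊ t, by simpa using hf0 0, ?_⟩
  intro t
  have htk : |t| ≤ (⌈|t|⌉₊ : ℝ) := Nat.le_ceil _
  have htk1 : |t| < (⌈|t|⌉₊ : ℝ) + 1 := lt_of_le_of_lt htk (by linarith)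
  have hev : (fun s => f ⌈|s|⌉₊ s) =ᶠ[nhds t] f ⌈|t|⌉₊ := by
    have hopen : IsOpen {s : ℝ | |s| < (⌈|t|⌉₊ : ℝ) + 1} :=
      isOpen_lt continuous_abs continuous_const
    filter_upwards [hopen.mem_nhds htk1] with s hs
    have hs' : |s| < (⌈|t|⌉₊ : ℝ) + 1 := hs
    have hsmem : s ∈ Icc (-((⌈|s|⌉₊ : ℝ) + 1)) ((⌈|s|⌉₊ : ℝ) + 1) :=
      hmem _ s (le_trans (Nat.le_ceil _) (by linarith))
    rcases le_total (⌈|s|⌉₊) (⌈|t|⌉₊) with h | h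
    · exact huniq _ _ h hsmem
    · exact (huniq _ _ h (hmem _ s hs'.le)).symm
  rw [Filter.EventuallyEq.hasDerivAt_iff hev]
  exact hfD _ t htk1

set_option maxHeartbeats 1000000 in
lemma main_ode {m c p R V d : ℝ} (hm : 0 < m) (hc : 0 < c) (hcm : c < 4 * m ^ 2)
    (hp : 1 < p) (hR : 0 < R)
    (hRp : R ^ (p - 1) = (p + 1) * m ^ 2 / 2 + 1)
    (hV : V = m * R + 1)
    (hd0 : 0 < d) (hdR : d ≤ R)
    (hE0 : d ^ (p + 1) / (p + 1) < (m ^ 2 - c / 4) * (d ^ 2 / 2)) :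
    ∃ w : ℝ → ℝ, w 0 = d ∧ (∀ t, 0 < w t) ∧ ContDiff ℝ 2 w ∧
      ∀ t, deriv (deriv w) t = m ^ 2 * w t - c * qf t * w t - w t ^ p := by
  have hV0 : 0 < V := by rw [hV]; positivity
  have hp1 : (0 : ℝ) < p + 1 := by linarith
  have hC0 : (0 : ℝ) ≤ max V (m ^ 2 * R + R ^ p) := le_trans hV0.le (le_max_left _ _)
  obtain ⟨x, hx0, hxd⟩ := exists_global_solution hC0
    (fun t => Fv_lipschitz (V := V) hm hc hcm hp hR t)
    (fun t y => Fv_norm_le hm hc hcm hp hR hV0 t y) (fun y => Fv_cont y) ((d, 0) : ℝ × ℝ)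
  set u : ℝ → ℝ := fun t => (x t).1 with hudef
  set v : ℝ → ℝ := fun t => (x t).2 with hvdef
  have hu : ∀ t, HasDerivAt u (clS V (v t)) t := by
    intro t
    exact ((hasFDerivAt_fst (𝕜 := ℝ)).comp_hasDerivAt t (hxd t))
  have hv : ∀ t, HasDerivAt v ((m ^ 2 - c * qf t) * clP R (u t) - gg p R (u t)) t := by
    intro t
    exact ((hasFDerivAt_snd (𝕜 := ℝ)).comp_hasDerivAt t (hxd t))
  have hu0 : u 0 = d := by rw [hudef]; simp [hx0]
  have hv0 : v 0 = 0 := by rw [hvdef]; simp [hx0]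
  set En : ℝ → ℝ := fun t => Kin V (v t) + (c * qf t - m ^ 2) * Phi R (u t) + Psi p R (u t)
    with hEndef
  have hEn : ∀ t, HasDerivAt En (c * qd t * Phi R (u t)) t := by
    intro t
    have h1 := (hasDerivAt_Kin hV0 (v t)).comp t (hv t)
    have h2 : HasDerivAt (fun t => c * qf t - m ^ 2) (c * qd t) t :=
      ((hasDerivAt_qf t).const_mul c).sub_const (m ^ 2)
    have h3 := (hasDerivAt_Phi hR (u t)).comp t (hu t)
    have h4 := h2.fun_mul h3
    have h5 := (hasDerivAt_Psi hp hR (u t)).comp t (hu t)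
    have h6 := (h1.fun_add h4).fun_add h5
    have h7 : HasDerivAt En
        (clS V (v t) * ((m ^ 2 - c * qf t) * clP R (u t) - gg p R (u t))
          + (c * qd t * Phi R (u t)
            + (c * qf t - m ^ 2) * (clP R (u t) * clS V (v t)))
          + gg p R (u t) * clS V (v t)) t := by
      simpa [hEndef, Function.comp_def] using h6
    convert h7 using 1
    ring
  have hEnle : ∀ t, En t ≤ En 0 := by
    have hdiffEn : Differentiable ℝ En := fun t => (hEn t).differentiableAt
    have hcont : Continuous En := hdiffEn.continuous
    intro t
    rcases le_total t 0 with ht | ht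
    · have hmono := monotoneOn_of_deriv_nonneg (convex_Iic (0 : ℝ)) hcont.continuousOn
        (fun s _ => (hEn s).differentiableAt.differentiableWithinAt)
        (fun s hs => by
          rw [(hEn s).deriv]
          rw [interior_Iic] at hs
          have h1 := qd_nonneg (le_of_lt hs)
          have h2 := Phi_nonneg hR (u s)
          nlinarith [mul_nonneg (mul_nonneg hc.le h1) h2])
      exact hmono (mem_Iic.mpr ht) (mem_Iic.mpr le_rfl) ht
    · have hmono := antitoneOn_of_deriv_nonpos (convex_Ici (0 : ℝ)) hcont.continuousOn
        (fun s _ => (hEn s).differentiableAt.differentiableWithinAt)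
        (fun s hs => by
          rw [(hEn s).deriv]
          rw [interior_Ici] at hs
          have h1 := qd_nonpos (le_of_lt hs)
          have h2 := Phi_nonneg hR (u s)
          nlinarith [mul_nonneg (mul_nonneg hc.le (neg_nonneg.mpr h1)) h2])
      exact hmono (mem_Ici.mpr le_rfl) (mem_Ici.mpr ht) ht
  have hEn0 : En 0 < 0 := by
    rw [hEndef]
    simp only [hu0, hv0]
    rw [Kin_zero hV0, qf_zero, Phi_of_mem hd0 hdR, Psi_of_mem hd0 hdR]
    nlinarith
  have hEnneg : ∀ t, En t < 0 := fun t => lt_of_le_of_lt (hEnle t) hEn0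
  have upos : ∀ t, 0 < u t := by
    intro t
    by_contra hcon
    push_neg at hcon
    have h1 := Kin_nonneg hV0 (v t)
    have h2 := hEnneg t
    rw [hEndef] at h2
    simp only at h2
    rw [Phi_of_nonpos hcon, Psi_of_nonpos hcon] at h2
    linarith
  have uleR : ∀ t, u t ≤ R := by
    intro t
    by_contra hcon
    push_neg at hcon
    have hup := upos t
    have h2 := hEnneg t
    rw [hEndef] at h2
    simp only at h2
    have hPhi : Phi R (u t) = R * u t - R ^ 2 / 2 := by
      unfold Phi
      rw [if_neg (not_le.mpr hup), if_neg (not_le.mpr hcon)]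
    have hPsi : Psi p R (u t) = R ^ (p + 1) / (p + 1) + R ^ p * (u t - R) := by
      unfold Psi
      rw [if_neg (not_le.mpr hup), if_neg (not_le.mpr hcon)]
    rw [hPhi, hPsi] at h2
    have hK := Kin_nonneg hV0 (v t)
    have hq := qf_pos t
    have hPhipos : (0 : ℝ) ≤ R * u t - R ^ 2 / 2 := by nlinarith
    have e1 : R ^ p = R ^ (p - 1) * R := by
      have h := Real.rpow_add hR (p - 1) 1
      rw [sub_add_cancel, Real.rpow_one] at h
      exact h
    have e2 : R ^ (p + 1) = R ^ (p - 1) * R ^ 2 := by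
      have h := Real.rpow_add hR (p - 1) 2
      rw [show p - 1 + 2 = p + 1 by ring] at h
      rw [h]
      norm_num [Real.rpow_natCast]
    have e3 : R ^ (p + 1) / (p + 1) = m ^ 2 * R ^ 2 / 2 + R ^ 2 / (p + 1) := by
      rw [e2, hRp]
      field_simp
    have h6 : (0 : ℝ) ≤ R * (u t - R) := by nlinarith
    have h7 : (0 : ℝ) ≤ m ^ 2 * (R * (u t - R)) * (p - 1) :=
      mul_nonneg (mul_nonneg (sq_nonneg m) h6) (by linarith)
    have h8 : (0 : ℝ) ≤ R ^ 2 / (p + 1) := by positivity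
    have h9 : (0 : ℝ) ≤ c * qf t * (R * u t - R ^ 2 / 2) :=
      mul_nonneg (mul_nonneg hc.le hq.le) hPhipos
    have key : m ^ 2 * (R * u t - R ^ 2 / 2) ≤ R ^ (p + 1) / (p + 1) + R ^ p * (u t - R) := by
      rw [e3, e1, hRp]
      nlinarith [h6, h7, h8]
    nlinarith [hK, h9, key]
  have vbound : ∀ t, -V ≤ v t ∧ v t ≤ V := by
    intro t
    have h2 := hEnneg t
    rw [hEndef] at h2
    simp only at h2
    have hPhiub := Phi_le hR (uleR t)
    have hPhilb := Phi_nonneg hR (u t)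
    have hPsilb := Psi_nonneg hp hR (u t)
    have hq := qf_pos t
    have hqu := qf_le_quarter t
    have hKub : Kin V (v t) < m ^ 2 * (R ^ 2 / 2) := by
      nlinarith [mul_nonneg (mul_nonneg hc.le hq.le) hPhilb,
        mul_le_mul_of_nonneg_left hPhiub (sq_nonneg m)]
    constructor
    · by_contra hcon
      push_neg at hcon
      have hKval : Kin V (v t) = -V * v t - V ^ 2 / 2 := by
        unfold Kin
        rw [if_pos (le_of_lt hcon)]
      rw [hKval, hV] at hKub
      nlinarith
    · by_contra hcon
      push_neg at hcon
      have hKval : Kin V (v t) = V * v t - V ^ 2 / 2 := by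
        unfold Kin
        rw [if_neg (by push_neg; linarith), if_neg (not_le.mpr hcon)]
      rw [hKval, hV] at hKub
      nlinarith
  have hu' : ∀ t, HasDerivAt u (v t) t := by
    intro t
    have h := hu t
    rwa [clS_eq (vbound t).1 (vbound t).2] at h
  have hv' : ∀ t, HasDerivAt v (m ^ 2 * u t - c * qf t * u t - u t ^ p) t := by
    intro t
    have h := hv t
    have hgg : gg p R (u t) = u t ^ p := by
      unfold gg
      rw [clP_eq (upos t).le (uleR t)]
    rw [clP_eq (upos t).le (uleR t), hgg] at h
    have : (m ^ 2 - c * qf t) * u t - u t ^ p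
        = m ^ 2 * u t - c * qf t * u t - u t ^ p := by ring
    rwa [this] at h
  have hderivu : deriv u = v := funext fun t => (hu' t).deriv
  have hderivv : deriv v = fun t => m ^ 2 * u t - c * qf t * u t - u t ^ p :=
    funext fun t => (hv' t).deriv
  have hdiffu : Differentiable ℝ u := fun t => (hu' t).differentiableAt
  have hdiffv : Differentiable ℝ v := fun t => (hv' t).differentiableAt
  refine ⟨u, hu0, upos, ?_, ?_⟩
  · show ContDiff ℝ 2 u
    rw [show (2 : WithTop ℕ∞) = 1 + 1 by norm_num, contDiff_succ_iff_deriv]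
    refine ⟨hdiffu, by simp, ?_⟩
    rw [hderivu, contDiff_one_iff_deriv]
    refine ⟨hdiffv, ?_⟩
    rw [hderivv]
    have hcu : Continuous u := hdiffu.continuous
    have hrp : Continuous fun t => u t ^ p :=
      hcu.rpow_const (fun t => Or.inl (ne_of_gt (upos t)))
    exact ((continuous_const.mul hcu).sub
      ((continuous_const.mul continuous_qf).mul hcu)).sub hrp
  · intro t
    rw [hderivu, hderivv]

lemma qf_def (t : ℝ) : Real.exp (-2 * t) / (1 + Real.exp (-2 * t)) ^ 2 = qf t := rfl

lemma rpow_split {d p : ℝ} (hd : 0 < d) (hp : 1 < p) :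
    d ^ (p + 1) = d ^ (p - 1) * d ^ 2 := by
  have h := Real.rpow_add hd (p - 1) 2
  rw [show p - 1 + 2 = p + 1 by ring] at h
  rw [h]
  norm_num [Real.rpow_natCast]

lemma rpow_exponent_cancel {B p : ℝ} (hB : 0 < B) (hp : 1 < p) :
    (B ^ ((p - 1)⁻¹)) ^ (p - 1) = B := by
  rw [← Real.rpow_mul hB.le, inv_mul_cancel₀ (by linarith : p - 1 ≠ 0), Real.rpow_one]

set_option maxHeartbeats 1000000 in
theorem stmt15 (n : ℕ) (hn : 3 ≤ n) (β : ℝ)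
    (hβ1 : ((n : ℝ) - 2) / 2 < β) (hβ2 : β < (n : ℝ) * ((n : ℝ) - 2) / 4) :
    {w : ℝ → ℝ |
      ContDiff ℝ 2 w ∧
      (∀ t : ℝ, 0 < w t) ∧
      (∀ t : ℝ,
        deriv (deriv w) t - (((n : ℝ) - 2) / 2) ^ 2 * w t
          + w t ^ (((n : ℝ) + 2) / ((n : ℝ) - 2))
          + ((n : ℝ) * ((n : ℝ) - 2) - 4 * β)
            * (Real.exp (-2 * t) / (1 + Real.exp (-2 * t)) ^ 2) * w t = 0)}.Infinite := by
  have hn3 : (3 : ℝ) ≤ (n : ℝ) := by exact_mod_cast hn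
  set m : ℝ := ((n : ℝ) - 2) / 2 with hm_def
  set p : ℝ := ((n : ℝ) + 2) / ((n : ℝ) - 2) with hp_def
  set c : ℝ := (n : ℝ) * ((n : ℝ) - 2) - 4 * β with hc_def
  have hn2 : (0 : ℝ) < (n : ℝ) - 2 := by linarith
  have hm : 0 < m := by rw [hm_def]; linarith
  have hp : 1 < p := by
    rw [hp_def]
    rw [lt_div_iff₀ hn2]
    linarith
  have hc : 0 < c := by rw [hc_def]; linarith
  have hm2 : 4 * m ^ 2 = ((n : ℝ) - 2) ^ 2 := by rw [hm_def]; ring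
  have hcm : c < 4 * m ^ 2 := by
    rw [hm2, hc_def]
    nlinarith
  have hβm : m ^ 2 - c / 4 = β - m := by rw [hm_def, hc_def]; ring
  have hβm' : 0 < β - m := by linarith [hβ1]
  have hp1 : (0 : ℝ) < p + 1 := by linarith
  have hpm1 : (0 : ℝ) < p - 1 := by linarith
  -- the radius R and the bound on initial data
  set B : ℝ := (p + 1) * m ^ 2 / 2 + 1 with hB_def
  have hB : 0 < B := by rw [hB_def]; positivity
  set R : ℝ := B ^ ((p - 1)⁻¹) with hR_def
  have hR : 0 < R := Real.rpow_pos_of_pos hB _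
  have hRp : R ^ (p - 1) = (p + 1) * m ^ 2 / 2 + 1 := by
    rw [hR_def, rpow_exponent_cancel hB hp, hB_def]
  set D : ℝ := ((p + 1) * (β - m) / 2) ^ ((p - 1)⁻¹) with hD_def
  have hDbase : (0 : ℝ) < (p + 1) * (β - m) / 2 := by positivity
  have hD : 0 < D := Real.rpow_pos_of_pos hDbase _
  set d₀ : ℝ := min R D with hd₀_def
  have hd₀ : 0 < d₀ := lt_min hR hD
  -- the family of solutions
  have hmain : ∀ d : Ioo (0 : ℝ) d₀, ∃ w : ℝ → ℝ, w 0 = (d : ℝ) ∧ (∀ t, 0 < w t) ∧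
      ContDiff ℝ 2 w ∧ ∀ t, deriv (deriv w) t
        = m ^ 2 * w t - c * qf t * w t - w t ^ p := by
    rintro ⟨d, hd1, hd2⟩
    have hdR : d ≤ R := le_of_lt (lt_of_lt_of_le hd2 (min_le_left _ _))
    have hdD : d < D := lt_of_lt_of_le hd2 (min_le_right _ _)
    have hdp : d ^ (p - 1) < (p + 1) * (β - m) / 2 := by
      calc d ^ (p - 1) < D ^ (p - 1) := by
            apply Real.rpow_lt_rpow (le_of_lt hd1) hdD
            linarith
        _ = (p + 1) * (β - m) / 2 := by rw [hD_def, rpow_exponent_cancel hDbase hp]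
    have hE0 : d ^ (p + 1) / (p + 1) < (m ^ 2 - c / 4) * (d ^ 2 / 2) := by
      rw [hβm, rpow_split hd1 hp]
      have hd2pos : (0 : ℝ) < d ^ 2 := by positivity
      have h1 : d ^ (p - 1) * d ^ 2 < ((p + 1) * (β - m) / 2) * d ^ 2 :=
        mul_lt_mul_of_pos_right hdp hd2pos
      calc d ^ (p - 1) * d ^ 2 / (p + 1) < ((p + 1) * (β - m) / 2) * d ^ 2 / (p + 1) := by
            gcongr
        _ = (β - m) * (d ^ 2 / 2) := by field_simp
    exact main_ode (V := m * R + 1) hm hc hcm hp hR hRp rfl hd1 hdR hE0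
  choose W hW0 hWpos hWsmooth hWode using hmain
  haveI : Infinite (Ioo (0 : ℝ) d₀) := Set.Ioo.infinite hd₀
  refine Set.infinite_of_injective_forall_mem (f := W) ?_ ?_
  · intro d1 d2 h
    have h0 : W d1 0 = W d2 0 := by rw [h]
    rw [hW0 d1, hW0 d2] at h0
    exact Subtype.ext h0
  · intro d
    refine ⟨hWsmooth d, hWpos d, ?_⟩
    intro t
    rw [qf_def, hWode d t]
    ring
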